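/- Let G be a finite connected multigraph whose underlying simple graph is a tree (a multi-edged tree), and let Π be a partition of V into connected parts. Then the quotient simple graph G̃_Π is a tree, and consequently any two acyclic orientations of G̃_Π are related by a sequence of switches at critical sets (all orientations of a tree lie in one switching equivalence class). -/

import Mathlib

/-- Adjacency-generating relation of the quotient simple graph. -/
def qrel {V ι : Type*} (m : V → V → ℕ) (p : V → ι) : ι → ι → Prop :=
  fun i j => ∃ u v, p u = i ∧ p v = j ∧ 0 < m u v

/-- `o'` is obtained from `o` by a switch at a critical set. -/
def switchStep {ι : Type*} (o o' : ι → ι → Prop) : Prop :=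
  ∃ A : Set ι,
    ((∀ i j, o i j → i ∈ A → j ∈ A) ∨ (∀ i j, o i j → i ∉ A → j ∉ A)) ∧
    (∀ i j, o' i j ↔
      ((((i ∈ A) ↔ (j ∈ A)) ∧ o i j) ∨ (¬((i ∈ A) ↔ (j ∈ A)) ∧ o j i)))

open SimpleGraph

/-- On any walk from inside `S` to outside `S` there is a crossing edge. -/
lemma exists_crossing {V : Type*} {H : SimpleGraph V} {S : Set V} {a b : V}
    (w : H.Walk a b) (ha : a ∈ S) (hb : b ∉ S) :
    ∃ x y, H.Adj x y ∧ x ∈ S ∧ y ∉ S := by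
  induction w with
  | nil => exact absurd ha hb
  | @cons u c d h q ih =>
    by_cases hc : c ∈ S
    · exact ih hc hb
    · exact ⟨u, c, h, ha, hc⟩

lemma reach_quot {V ι : Type*} (m : V → V → ℕ) (hsymm : ∀ u v, m u v = m v u) (p : V → ι)
    {u v : V} (w : (SimpleGraph.fromRel (fun u v => 0 < m u v)).Walk u v) :
    (SimpleGraph.fromRel (qrel m p)).Reachable (p u) (p v) := by
  induction w with
  | nil => rfl
  | @cons a c d h q ih =>
    refine Reachable.trans ?_ ih
    rcases eq_or_ne (p a) (p c) with he | hne
    · rw [he]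
    · rw [fromRel_adj] at h
      have hm : 0 < m a c := by
        rcases h.2 with h2 | h2
        · exact h2
        · rwa [hsymm]
      exact (Adj.reachable ((fromRel_adj _ _ _).2
        ⟨hne, Or.inl ⟨a, c, rfl, rfl, hm⟩⟩))

/-- Key crossing lemma: for any edge of the quotient graph there is a set `A`
containing one endpoint and not the other such that the only crossing edge of
the quotient graph is this edge. -/
lemma crossing_lemma {V ι : Type*}
    (m : V → V → ℕ) (hsymm : ∀ u v, m u v = m v u)
    (htree : (SimpleGraph.fromRel (fun u v => 0 < m u v)).IsTree)
    (p : V → ι)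
    (hpconn : ∀ i : ι, ((SimpleGraph.fromRel (fun u v => 0 < m u v)).induce {v : V | p v = i}).Connected)
    {i j : ι} (hij : (SimpleGraph.fromRel (qrel m p)).Adj i j) :
    ∃ A : Set ι, j ∈ A ∧ i ∉ A ∧
      ∀ a b, (SimpleGraph.fromRel (qrel m p)).Adj a b → a ∈ A → b ∉ A → a = j ∧ b = i := by
  classical
  set G := SimpleGraph.fromRel (fun u v => 0 < m u v) with hG
  rw [fromRel_adj] at hij
  obtain ⟨hne, hq⟩ := hij
  -- extract u v with p u = i, p v = j, 0 < m u v
  obtain ⟨u, v, hpu, hpv, hm⟩ : ∃ u v, p u = i ∧ p v = j ∧ 0 < m u v := by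
    rcases hq with ⟨x, y, hx, hy, hxy⟩ | ⟨x, y, hx, hy, hxy⟩
    · exact ⟨x, y, hx, hy, hxy⟩
    · exact ⟨y, x, hy, hx, by rwa [hsymm]⟩
  have huv : G.Adj u v := by
    rw [hG, fromRel_adj]
    exact ⟨fun h => hne (by rw [← hpu, ← hpv, h]), Or.inl hm⟩
  have hbr : ¬(G \ fromEdgeSet {s(u, v)}).Reachable u v :=
    ((isBridge_iff).1 ((isAcyclic_iff_forall_adj_isBridge.1 htree.2) huv))
  set G' := G \ fromEdgeSet {s(u, v)} with hG'
  set B : Set V := {w | G'.Reachable v w} with hB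
  have hvB : v ∈ B := Reachable.refl v
  have huB : u ∉ B := fun h => hbr h.symm
  -- the only G-edge crossing B is (v, u)
  have Gcross : ∀ x y, G.Adj x y → x ∈ B → y ∉ B → x = v ∧ y = u := by
    intro x y hxy hxB hyB
    by_cases hs : s(x, y) = s(u, v)
    · rw [Sym2.eq_iff] at hs
      rcases hs with ⟨hx, hy⟩ | ⟨hx, hy⟩
      · exact absurd (hx ▸ hxB) huB
      · exact ⟨hx, hy⟩
    · exfalso
      have : G'.Adj x y := by
        rw [hG', sdiff_adj, fromEdgeSet_adj]
        exact ⟨hxy, fun h => hs h.1⟩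
      exact hyB (hxB.trans this.reachable)
  -- each fiber is entirely inside or entirely outside B
  have fiber : ∀ k : ι, (∀ w, p w = k → w ∈ B) ∨ (∀ w, p w = k → w ∉ B) := by
    intro k
    by_contra hcon
    push_neg at hcon
    obtain ⟨⟨x, hxk, hxB⟩, ⟨y, hyk, hyB⟩⟩ := hcon
    -- y ∈ B, x ∉ B, both in fiber k; get a crossing edge inside the fiber
    have hre := ((hpconn k).preconnected ⟨y, hyk⟩ ⟨x, hxk⟩)
    obtain ⟨w⟩ := hre
    obtain ⟨s, t, hst, hsB, htB⟩ :=
      exists_crossing (S := {z : {v : V | p v = k} | (z : V) ∈ B}) w hyB hxB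
    have hGst : G.Adj (s : V) (t : V) := hst
    obtain ⟨hsv, htu⟩ := Gcross _ _ hGst hsB htB
    have h1 : p (s : V) = k := s.2
    have h2 : p (t : V) = k := t.2
    rw [hsv] at h1; rw [htu] at h2
    exact hne (by rw [← hpu, h2, ← h1, hpv])
  refine ⟨{k | ∀ w, p w = k → w ∈ B}, ?_, ?_, ?_⟩
  · rcases fiber j with h | h
    · exact h
    · exact absurd hvB (h v hpv)
  · intro h
    exact huB (h u hpu)
  · intro a b hab haA hbA
    rw [fromRel_adj] at hab
    obtain ⟨hne', hq'⟩ := hab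
    obtain ⟨x, y, hx, hy, hxy⟩ : ∃ x y, p x = a ∧ p y = b ∧ 0 < m x y := by
      rcases hq' with ⟨x, y, hx, hy, hxy⟩ | ⟨x, y, hx, hy, hxy⟩
      · exact ⟨x, y, hx, hy, hxy⟩
      · exact ⟨y, x, hy, hx, by rwa [hsymm]⟩
    have hxB : x ∈ B := haA x hx
    have hyB : y ∉ B := by
      rcases fiber b with h | h
      · exact absurd h hbA
      · exact h y hy
    have hGxy : G.Adj x y := by
      rw [hG, fromRel_adj]
      exact ⟨fun h => hne' (by rw [← hx, ← hy, h]), Or.inl hxy⟩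
    obtain ⟨hxv, hyu⟩ := Gcross _ _ hGxy hxB hyB
    constructor
    · rw [← hx, hxv, hpv]
    · rw [← hy, hyu, hpu]

theorem stmt18 {V ι : Type*} [Fintype V] [DecidableEq V] [Fintype ι] [DecidableEq ι]
    (m : V → V → ℕ) (hsymm : ∀ u v, m u v = m v u) (hloop : ∀ v, m v v = 0)
    (htree : (SimpleGraph.fromRel (fun u v => 0 < m u v)).IsTree)
    (p : V → ι) (hsurj : Function.Surjective p)
    (hpconn : ∀ i : ι, ((SimpleGraph.fromRel (fun u v => 0 < m u v)).induce {v : V | p v = i}).Connected) :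
    (SimpleGraph.fromRel (qrel m p)).IsTree ∧
    ∀ o₁ o₂ : ι → ι → Prop,
      ((∀ i j, o₁ i j → (SimpleGraph.fromRel (qrel m p)).Adj i j) ∧
       (∀ i j, (SimpleGraph.fromRel (qrel m p)).Adj i j → o₁ i j ∨ o₁ j i) ∧
       (∀ i j, o₁ i j → ¬ o₁ j i)) →
      ((∀ i j, o₂ i j → (SimpleGraph.fromRel (qrel m p)).Adj i j) ∧
       (∀ i j, (SimpleGraph.fromRel (qrel m p)).Adj i j → o₂ i j ∨ o₂ j i) ∧
       (∀ i j, o₂ i j → ¬ o₂ j i)) →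
      Relation.ReflTransGen switchStep o₁ o₂ := by
  classical
  set Gq := SimpleGraph.fromRel (qrel m p) with hGq
  have hconn : Gq.Connected := by
    have hVne : Nonempty V := htree.isConnected.nonempty
    have hιne : Nonempty ι := ⟨p (Classical.arbitrary V)⟩
    rw [connected_iff]
    refine ⟨fun a b => ?_, hιne⟩
    obtain ⟨x, hx⟩ := hsurj a
    obtain ⟨y, hy⟩ := hsurj b
    obtain ⟨w⟩ := htree.isConnected.preconnected x y
    rw [← hx, ← hy]
    exact reach_quot m hsymm p w
  have hacyc : Gq.IsAcyclic := by
    rw [isAcyclic_iff_forall_adj_isBridge]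
    intro x y hxy
    rw [isBridge_iff]
    intro hre
    obtain ⟨A, hyA, hxA, hcr⟩ := crossing_lemma m hsymm htree p hpconn hxy
    obtain ⟨w⟩ := hre
    obtain ⟨s, t, hst, hsA, htA⟩ := exists_crossing (S := Aᶜ) w hxA (not_not.2 hyA)
    have hst' : Gq.Adj t s := (sdiff_adj _ _ _ _ |>.1 hst).1.symm
    obtain ⟨hty, hsx⟩ := hcr t s hst' (not_not.1 htA) hsA
    have : ¬ (fromEdgeSet {s(x, y)}).Adj s t := (sdiff_adj _ _ _ _ |>.1 hst).2
    exact this ((fromEdgeSet_adj _).2 ⟨by rw [hsx, hty]; exact Set.mem_singleton _, fun h => hxy.ne (by rw [← hsx, ← hty, h])⟩)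
  refine ⟨⟨hconn, hacyc⟩, ?_⟩
  intro o₁ o₂ ho₁ ho₂
  obtain ⟨h2adj, h2tot, h2asym⟩ := ho₂
  -- disagreement counting
  let D : (ι → ι → Prop) → Finset (ι × ι) := fun o =>
    Finset.univ.filter (fun q : ι × ι => ¬(o q.1 q.2 ↔ o₂ q.1 q.2))
  suffices key : ∀ n : ℕ, ∀ o : ι → ι → Prop,
      ((∀ i j, o i j → Gq.Adj i j) ∧ (∀ i j, Gq.Adj i j → o i j ∨ o j i) ∧
        (∀ i j, o i j → ¬ o j i)) → (D o).card ≤ n → Relation.ReflTransGen switchStep o o₂ by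
    exact key (D o₁).card o₁ ho₁ le_rfl
  intro n
  induction n with
  | zero =>
    intro o ho hcard
    have hD : D o = ∅ := Finset.card_eq_zero.1 (Nat.le_zero.1 hcard)
    have : o = o₂ := by
      funext a b
      by_contra hab
      have : (a, b) ∈ D o := by
        simp only [D, Finset.mem_filter, Finset.mem_univ, true_and]
        intro h
        exact hab (by rw [iff_iff_eq] at h; exact h)
      rw [hD] at this
      exact absurd this (Finset.notMem_empty _)
    rw [this]
  | succ n ih =>
    intro o ho hcard
    obtain ⟨hoadj, hotot, hoasym⟩ := ho
    by_cases hDe : D o = ∅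
    · have : o = o₂ := by
        funext a b
        by_contra hab
        have : (a, b) ∈ D o := by
          simp only [D, Finset.mem_filter, Finset.mem_univ, true_and]
          intro h
          exact hab (by rw [iff_iff_eq] at h; exact h)
        rw [hDe] at this
        exact absurd this (Finset.notMem_empty _)
      rw [this]
    · -- find a disagreeing directed edge (a, b) with o a b, ¬ o₂ a b, ¬ o b a, o₂ b a
      obtain ⟨⟨i, j⟩, hijD⟩ := Finset.nonempty_iff_ne_empty.2 hDe
      simp only [D, Finset.mem_filter, Finset.mem_univ, true_and] at hijD
      obtain ⟨a, b, hoab, h2ab, hoba, h2ba⟩ :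
          ∃ a b, o a b ∧ ¬ o₂ a b ∧ ¬ o b a ∧ o₂ b a := by
        by_cases h1 : o i j
        · have h2 : ¬ o₂ i j := fun h => hijD ⟨fun _ => h, fun _ => h1⟩
          have hadj : Gq.Adj i j := hoadj i j h1
          have h2ji : o₂ j i := (h2tot i j hadj).resolve_left h2
          exact ⟨i, j, h1, h2, hoasym i j h1, h2ji⟩
        · have h2 : o₂ i j := by
            by_contra h2
            exact hijD ⟨fun h => absurd h h1, fun h => absurd h h2⟩
          have hadj : Gq.Adj i j := h2adj i j h2
          have hji : o j i := (hotot i j hadj).resolve_left h1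
          exact ⟨j, i, hji, h2asym i j h2, h1, h2⟩
      have hadjab : Gq.Adj a b := hoadj a b hoab
      obtain ⟨A, hbA, haA, hcr⟩ := crossing_lemma m hsymm htree p hpconn hadjab
      -- the switched orientation
      set o' : ι → ι → Prop := fun x y =>
        (((x ∈ A) ↔ (y ∈ A)) ∧ o x y) ∨ (¬((x ∈ A) ↔ (y ∈ A)) ∧ o y x) with ho'
      have hstep : switchStep o o' := by
        refine ⟨A, Or.inl ?_, fun x y => Iff.rfl⟩
        intro x y hxy hxA
        by_contra hyA
        obtain ⟨hxb, hya⟩ := hcr x y (hoadj x y hxy) hxA hyA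
        rw [hxb, hya] at hxy
        exact hoba hxy
      -- o' differs from o exactly on the pairs (a,b) and (b,a)
      have hsame : ∀ x y, ¬((x = a ∧ y = b) ∨ (x = b ∧ y = a)) → (o' x y ↔ o x y) := by
        intro x y hn
        by_cases hc : (x ∈ A) ↔ (y ∈ A)
        · simp only [ho', hc, not_true, false_and, or_false, true_and]
        · -- crossing pair: show neither o x y nor o y x unless (x,y) is (a,b)/(b,a)
          have hxyA : (x ∈ A ∧ y ∉ A) ∨ (x ∉ A ∧ y ∈ A) := by
            by_cases hx : x ∈ A
            · exact Or.inl ⟨hx, fun hy => hc ⟨fun _ => hy, fun _ => hx⟩⟩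
            · refine Or.inr ⟨hx, ?_⟩
              by_contra hy
              exact hc ⟨fun h => absurd h hx, fun h => absurd h hy⟩
          have hnoxy : ¬ o x y := by
            intro h
            rcases hxyA with ⟨hx, hy⟩ | ⟨hx, hy⟩
            · obtain ⟨h1, h2⟩ := hcr x y (hoadj x y h) hx hy
              exact hn (Or.inr ⟨h1, h2⟩)
            · obtain ⟨h1, h2⟩ := hcr y x (hoadj x y h).symm hy hx
              exact hn (Or.inl ⟨h2, h1⟩)
          have hnoyx : ¬ o y x := by
            intro h
            rcases hxyA with ⟨hx, hy⟩ | ⟨hx, hy⟩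
            · obtain ⟨h1, h2⟩ := hcr x y (hoadj y x h).symm hx hy
              exact hn (Or.inr ⟨h1, h2⟩)
            · obtain ⟨h1, h2⟩ := hcr y x (hoadj y x h) hy hx
              exact hn (Or.inl ⟨h2, h1⟩)
          simp only [ho', hc, false_and, true_and, or_false, false_or]
          exact ⟨fun h => absurd h.2 hnoyx, fun h => absurd h hnoxy⟩
      have hab_ne : ¬((a ∈ A) ↔ (b ∈ A)) := fun h => haA (h.2 hbA)
      have hba_ne : ¬((b ∈ A) ↔ (a ∈ A)) := fun h => haA (h.1 hbA)
      have ho'ab : ¬ o' a b := by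
        simp only [ho', hab_ne, false_and, true_and, false_or]
        exact fun h => hoasym a b hoab h.2
      have ho'ba : o' b a := Or.inr ⟨hba_ne, hoab⟩
      -- o' is still a valid orientation
      have ho'orient : (∀ i j, o' i j → Gq.Adj i j) ∧ (∀ i j, Gq.Adj i j → o' i j ∨ o' j i) ∧
          (∀ i j, o' i j → ¬ o' j i) := by
        refine ⟨?_, ?_, ?_⟩
        · intro x y h
          rcases h with ⟨_, h⟩ | ⟨_, h⟩
          · exact hoadj x y h
          · exact (hoadj y x h).symm
        · intro x y hxy
          by_cases hc : (x ∈ A) ↔ (y ∈ A)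
          · rcases hotot x y hxy with h | h
            · exact Or.inl (Or.inl ⟨hc, h⟩)
            · exact Or.inr (Or.inl ⟨hc.symm, h⟩)
          · have hc' : ¬((y ∈ A) ↔ (x ∈ A)) := fun h => hc h.symm
            rcases hotot x y hxy with h | h
            · exact Or.inr (Or.inr ⟨hc', h⟩)
            · exact Or.inl (Or.inr ⟨hc, h⟩)
        · intro x y h1 h2
          rcases h1 with ⟨hc1, h1⟩ | ⟨hc1, h1⟩ <;> rcases h2 with ⟨hc2, h2⟩ | ⟨hc2, h2⟩
          · exact hoasym x y h1 h2
          · exact hc2 hc1.symm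
          · exact hc1 hc2.symm
          · exact hoasym y x h1 h2
      -- cardinality decreases
      have hsub : D o' ⊆ D o := by
        intro q hq
        simp only [D, Finset.mem_filter, Finset.mem_univ, true_and] at hq ⊢
        intro hiff
        apply hq
        by_cases hn : (q.1 = a ∧ q.2 = b) ∨ (q.1 = b ∧ q.2 = a)
        · rcases hn with ⟨h1, h2⟩ | ⟨h1, h2⟩
          · rw [h1, h2]
            constructor
            · intro h; exact absurd h ho'ab
            · intro h; exact absurd h h2ab
          · rw [h1, h2]
            exact ⟨fun _ => h2ba, fun _ => ho'ba⟩
        · exact (hsame q.1 q.2 hn).trans hiff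
      have habD : (a, b) ∈ D o := by
        simp only [D, Finset.mem_filter, Finset.mem_univ, true_and]
        intro h
        exact h2ab (h.1 hoab)
      have habD' : (a, b) ∉ D o' := by
        simp only [D, Finset.mem_filter, Finset.mem_univ, true_and, not_not]
        exact ⟨fun h => absurd h ho'ab, fun h => absurd h h2ab⟩
      have hlt : (D o').card < (D o).card :=
        Finset.card_lt_card (Finset.ssubset_iff_of_subset hsub |>.2 ⟨(a, b), habD, habD'⟩)
      have := ih o' ho'orient (by omega)
      exact Relation.ReflTransGen.head hstep this
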